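/- arXiv:2002.06043 — 6 statements merged into one kernel-verified Lean document; each statement's English description precedes it below -/
import Mathlib

section
/- The unordered set estimator e^{US}(S^k) = ∑_{s∈S^k} p(s) R(S^k,s) f(s), where R(S^k,s) = p^{D\{s}}(S^k\{s})/p(S^k) is the leave-one-out ratio, is an unbiased estimator of E_{x~p}[f(x)]: that is, ∑_{S ⊆ D, |S|=k} p(S) e^{US}(S) = ∑_{x∈D} p(x) f(x). -/
open Finset MeasureTheory

variable {α : Type*}

/-- Probability of drawing the ordered sample `B` sequentially without replacement
from (unnormalized) weights `p`, when `t` is the total remaining probability mass. -/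
noncomputable def ordProb (p : α → ℝ) : ℝ → List α → ℝ
  | _, [] => 1
  | t, b :: L => (p b / t) * ordProb p (t - p b) L

/-- Probability of drawing the unordered sample `S` without replacement:
sum of `ordProb` over all orderings of `S`. -/
noncomputable def setProb (p : α → ℝ) (t : ℝ) (S : Finset α) : ℝ :=
  (S.toList.permutations.map (ordProb p t)).sum

section Aux

variable [DecidableEq α]

lemma ordProb_pos (p : α → ℝ) : ∀ (l : List α) (t : ℝ),
    (∀ b ∈ l, 0 < p b) → (l.map p).sum ≤ t → 0 < ordProb p t l
  | [], t, _, _ => by simp [ordProb]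
  | b :: L, t, hpos, hle => by
    have hb : 0 < p b := hpos b (by simp)
    have hLpos : ∀ x ∈ L, 0 < p x := fun x hx => hpos x (by simp [hx])
    have hLsum : 0 ≤ (L.map p).sum :=
      List.sum_nonneg (by
        intro x hx
        obtain ⟨y, hy, rfl⟩ := List.mem_map.1 hx
        exact (hLpos y hy).le)
    have ht : 0 < t := by
      have : p b + (L.map p).sum ≤ t := by simpa [List.map_cons] using hle
      linarith
    have hrec : 0 < ordProb p (t - p b) L := by
      apply ordProb_pos p L (t - p b) hLpos
      have : p b + (L.map p).sum ≤ t := by simpa [List.map_cons] using hle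
      linarith
    have : 0 < p b / t := div_pos hb ht
    simpa [ordProb] using mul_pos this hrec

/-- The finset of orderings of `S`. -/
noncomputable def permsOf (S : Finset α) : Finset (List α) :=
  S.toList.permutations.toFinset

lemma mem_permsOf {S : Finset α} {l : List α} :
    l ∈ permsOf S ↔ (l : Multiset α) = S.val := by
  rw [permsOf, List.mem_toFinset, List.mem_permutations, ← Finset.coe_toList S,
    Multiset.coe_eq_coe]

lemma setProb_eq_sum (p : α → ℝ) (t : ℝ) (S : Finset α) :
    setProb p t S = ∑ l ∈ permsOf S, ordProb p t l := by
  rw [setProb, permsOf, List.sum_toFinset _ (List.nodup_permutations _ S.nodup_toList)]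

lemma setProb_empty (p : α → ℝ) (t : ℝ) : setProb p t (∅ : Finset α) = 1 := by
  simp [setProb, ordProb]

lemma setProb_pos {p : α → ℝ} {t : ℝ} {S : Finset α}
    (hp : ∀ x ∈ S, 0 < p x) (hle : ∑ x ∈ S, p x ≤ t) : 0 < setProb p t S := by
  rw [setProb_eq_sum]
  have hne : (permsOf S).Nonempty := by
    refine ⟨S.toList, ?_⟩
    rw [mem_permsOf, Finset.coe_toList]
  apply Finset.sum_pos _ hne
  intro l hl
  rw [mem_permsOf] at hl
  have hmem : ∀ b ∈ l, b ∈ S := by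
    intro b hb
    have : b ∈ (l : Multiset α) := by simpa using hb
    rw [hl] at this
    exact this
  apply ordProb_pos
  · exact fun b hb => hp b (hmem b hb)
  · have : (l.map p).sum = ∑ x ∈ S, p x := by
      have : ((l.map p : List ℝ) : Multiset ℝ) = S.val.map p := by
        rw [← hl]; simp
      calc (l.map p).sum = ((l.map p : List ℝ) : Multiset ℝ).sum := by simp
        _ = (S.val.map p).sum := by rw [this]
        _ = ∑ x ∈ S, p x := rfl
    linarith

lemma setProb_recursion (p : α → ℝ) (t : ℝ) {S : Finset α} (hS : S.Nonempty) :
    setProb p t S = ∑ s ∈ S, (p s / t) * setProb p (t - p s) (S.erase s) := by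
  rw [setProb_eq_sum]
  have hrhs : ∀ s ∈ S, (p s / t) * setProb p (t - p s) (S.erase s)
      = ∑ l ∈ permsOf (S.erase s), ordProb p t (s :: l) := by
    intro s _
    rw [setProb_eq_sum, Finset.mul_sum]
    refine Finset.sum_congr rfl fun l _ => ?_
    rfl
  rw [Finset.sum_congr rfl hrhs, Finset.sum_sigma']
  refine (Finset.sum_bij (fun x _ => x.1 :: x.2) ?_ ?_ ?_ ?_).symm
  · rintro ⟨s, l⟩ hx
    simp only [Finset.mem_sigma] at hx
    obtain ⟨hs, hl⟩ := hx
    rw [mem_permsOf] at hl ⊢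
    rw [← Multiset.cons_coe, hl, Finset.erase_val,
      Multiset.cons_erase (show s ∈ S.val from hs)]
  · rintro ⟨s, l⟩ hx ⟨s', l'⟩ hx' h
    simp only [List.cons.injEq] at h
    obtain ⟨rfl, rfl⟩ := h
    rfl
  · intro l hl
    rw [mem_permsOf] at hl
    have hlne : l ≠ [] := by
      rintro rfl
      have h0 : S.val = 0 := by simpa using hl.symm
      exact hS.ne_empty (Finset.val_eq_zero.mp h0)
    obtain ⟨a, l', rfl⟩ := List.exists_cons_of_ne_nil hlne
    have ha : a ∈ S := by
      rw [Finset.mem_def, ← hl, ← Multiset.cons_coe]; simp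
    refine ⟨⟨a, l'⟩, ?_, rfl⟩
    simp only [Finset.mem_sigma]
    refine ⟨ha, ?_⟩
    rw [mem_permsOf, Finset.erase_val, ← hl, ← Multiset.cons_coe,
      Multiset.erase_cons_head]
  · rintro ⟨s, l⟩ _
    rfl

/-- Exchange lemma: summing over pairs (S, s ∈ S) with |S| = m+1 equals summing over
pairs (s, T ⊆ E \ {s}) with |T| = m. -/
lemma exchange (E : Finset α) (m : ℕ) (F : α → Finset α → ℝ) :
    ∑ S ∈ E.powersetCard (m + 1), ∑ s ∈ S, F s (S.erase s)
      = ∑ s ∈ E, ∑ T ∈ (E.erase s).powersetCard m, F s T := by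
  rw [Finset.sum_sigma', Finset.sum_sigma']
  refine Finset.sum_bij (fun x _ => (⟨x.2, x.1.erase x.2⟩ : Σ _ : α, Finset α)) ?_ ?_ ?_ ?_
  · rintro ⟨S, s⟩ hx
    simp only [Finset.mem_sigma, Finset.mem_powersetCard] at hx ⊢
    obtain ⟨⟨hSE, hcard⟩, hs⟩ := hx
    refine ⟨hSE hs, ?_, ?_⟩
    · exact Finset.erase_subset_erase s hSE
    · rw [Finset.card_erase_of_mem hs, hcard]; omega
  · rintro ⟨S, s⟩ hx ⟨S', s'⟩ hx' h
    simp only [Finset.mem_sigma, Finset.mem_powersetCard] at hx hx'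
    rw [Sigma.ext_iff] at h
    obtain ⟨rfl, h2⟩ := h
    rw [heq_eq_eq] at h2
    rw [Sigma.ext_iff, heq_eq_eq]
    refine ⟨?_, rfl⟩
    have := congrArg (insert s) h2
    rwa [Finset.insert_erase hx.2, Finset.insert_erase hx'.2] at this
  · rintro ⟨s, T⟩ hx
    simp only [Finset.mem_sigma, Finset.mem_powersetCard] at hx
    obtain ⟨hs, hTE, hcard⟩ := hx
    have hsT : s ∉ T := fun h => (Finset.mem_erase.1 (hTE h)).1 rfl
    refine ⟨⟨insert s T, s⟩, ?_, ?_⟩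
    · simp only [Finset.mem_sigma, Finset.mem_powersetCard]
      refine ⟨⟨?_, ?_⟩, Finset.mem_insert_self s T⟩
      · exact Finset.insert_subset hs (hTE.trans (Finset.erase_subset s E))
      · rw [Finset.card_insert_of_notMem hsT, hcard]
    · exact congrArg (Sigma.mk s) (Finset.erase_insert hsT)
  · rintro ⟨S, s⟩ _
    rfl

/-- Total probability: the unordered sample probabilities sum to 1. -/
lemma setProb_sum_eq_one (p : α → ℝ) : ∀ (m : ℕ) (E : Finset α), m ≤ E.card →
    (∀ x ∈ E, 0 < p x) → ∑ T ∈ E.powersetCard m, setProb p (∑ x ∈ E, p x) T = 1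
  | 0, E, _, _ => by simp [setProb_empty]
  | (m + 1), E, hm, hp => by
    have hEne : E.Nonempty := Finset.card_pos.1 (by omega)
    have ht : 0 < ∑ x ∈ E, p x := Finset.sum_pos hp hEne
    have hrec : ∀ T ∈ E.powersetCard (m + 1),
        setProb p (∑ x ∈ E, p x) T
          = ∑ s ∈ T, (p s / ∑ x ∈ E, p x) * setProb p ((∑ x ∈ E, p x) - p s) (T.erase s) := by
      intro T hT
      rw [Finset.mem_powersetCard] at hT
      exact setProb_recursion p _ (Finset.card_pos.1 (by omega))
    rw [Finset.sum_congr rfl hrec,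
      exchange E m (fun s T => (p s / ∑ x ∈ E, p x) * setProb p ((∑ x ∈ E, p x) - p s) T)]
    have hstep : ∀ s ∈ E,
        ∑ T ∈ (E.erase s).powersetCard m,
          (p s / ∑ x ∈ E, p x) * setProb p ((∑ x ∈ E, p x) - p s) T
          = p s / ∑ x ∈ E, p x := by
      intro s hs
      rw [← Finset.mul_sum]
      have hsub : (∑ x ∈ E, p x) - p s = ∑ x ∈ E.erase s, p x := by
        rw [← Finset.add_sum_erase E p hs]; ring
      rw [hsub, setProb_sum_eq_one p m (E.erase s)
        (by rw [Finset.card_erase_of_mem hs]; omega)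
        (fun x hx => hp x (Finset.mem_of_mem_erase hx)), mul_one]
    rw [Finset.sum_congr rfl hstep, ← Finset.sum_div, div_self ht.ne']

end Aux

theorem unordered_set_estimator_unbiased [DecidableEq α] (D : Finset α) (k : ℕ)
    (hk1 : 1 ≤ k) (hk : k ≤ D.card) (p f : α → ℝ)
    (hp : ∀ x ∈ D, 0 < p x) (hsum : ∑ x ∈ D, p x = 1) :
    ∑ S ∈ D.powersetCard k, setProb p 1 S *
        ∑ s ∈ S, p s * (setProb p (1 - p s) (S.erase s) / setProb p 1 S) * f s
      = ∑ x ∈ D, p x * f x := by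
  have hmain : ∀ S ∈ D.powersetCard k,
      setProb p 1 S * ∑ s ∈ S, p s * (setProb p (1 - p s) (S.erase s) / setProb p 1 S) * f s
        = ∑ s ∈ S, p s * setProb p (1 - p s) (S.erase s) * f s := by
    intro S hS
    rw [Finset.mem_powersetCard] at hS
    have hSpos : 0 < setProb p 1 S := by
      apply setProb_pos (fun x hx => hp x (hS.1 hx))
      rw [← hsum]
      exact Finset.sum_le_sum_of_subset_of_nonneg hS.1 (fun x hx _ => (hp x hx).le)
    rw [Finset.mul_sum]
    refine Finset.sum_congr rfl fun s _ => ?_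
    field_simp
  rw [Finset.sum_congr rfl hmain]
  obtain ⟨m, rfl⟩ : ∃ m, k = m + 1 := ⟨k - 1, by omega⟩
  rw [exchange D m (fun s T => p s * setProb p (1 - p s) T * f s)]
  refine Finset.sum_congr rfl fun s hs => ?_
  have hsub : (1 : ℝ) - p s = ∑ x ∈ D.erase s, p x := by
    rw [← hsum, ← Finset.add_sum_erase D p hs]; ring
  calc ∑ T ∈ (D.erase s).powersetCard m, p s * setProb p (1 - p s) T * f s
      = p s * f s * ∑ T ∈ (D.erase s).powersetCard m, setProb p (1 - p s) T := by
        rw [Finset.mul_sum]; exact Finset.sum_congr rfl fun T _ => by ring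
    _ = p s * f s := by
        rw [hsub, setProb_sum_eq_one p m (D.erase s)
          (by rw [Finset.card_erase_of_mem hs]; omega)
          (fun x hx => hp x (Finset.mem_of_mem_erase hx)), mul_one]
end

section
/- The conditional expectation of the single-sample estimator given the unordered sample equals the unordered set estimator: E_{b_1 ~ p(b_1 | S^k)}[f(b_1)] = ∑_{s∈S^k} p(s) R(S^k,s) f(s), where R(S^k,s) = p^{D\{s}}(S^k\{s})/p(S^k). -/
open Finset MeasureTheory

variable {α : Type*}

lemma perm_split [DecidableEq α] [Inhabited α] (S : Finset α) (hSne : S.Nonempty) (g : List α → ℝ) :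
    ((S.toList.permutations.map g).sum)
      = ∑ s ∈ S, (((S.erase s).toList.permutations.map (fun L => g (s :: L))).sum) := by
  have hnd : S.toList.Nodup := S.nodup_toList
  rw [← List.sum_toFinset g (List.nodup_permutations _ hnd)]
  have hRHS : ∀ s ∈ S,
      (((S.erase s).toList.permutations.map (fun L => g (s :: L))).sum)
        = ∑ L ∈ ((S.erase s).toList.permutations).toFinset, g (s :: L) := by
    intro s _
    rw [← List.sum_toFinset _ (List.nodup_permutations _ (S.erase s).nodup_toList)]
  rw [Finset.sum_congr rfl hRHS, Finset.sum_sigma']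
  refine (Finset.sum_nbij' (fun x => x.1 :: x.2) (fun B => ⟨B.headI, B.tail⟩) ?_ ?_ ?_ ?_ ?_).symm
  · rintro ⟨s, L⟩ hx
    simp only [Finset.mem_sigma, List.mem_toFinset, List.mem_permutations] at hx ⊢
    obtain ⟨hs, hL⟩ := hx
    rw [← Multiset.coe_eq_coe] at hL ⊢
    rw [Finset.coe_toList] at hL ⊢
    rw [← Multiset.cons_coe, hL, Finset.erase_val, Multiset.cons_erase (by simpa using hs)]
  · intro B hB
    simp only [List.mem_toFinset, List.mem_permutations] at hB
    have hBne : B ≠ [] := by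
      intro h
      rw [h] at hB
      have := hB.length_eq
      simp [Finset.length_toList] at this
      exact hSne.ne_empty (Finset.card_eq_zero.mp this.symm)
    obtain ⟨a, t, rfl⟩ := List.exists_cons_of_ne_nil hBne
    simp only [Finset.mem_sigma, List.mem_toFinset, List.mem_permutations, List.headI_cons,
      List.tail_cons]
    have hco : (↑(a :: t) : Multiset α) = S.val := by
      rw [← Finset.coe_toList S, Multiset.coe_eq_coe]; exact hB
    have ha : a ∈ S := by
      rw [← Finset.mem_val, ← hco]; simp
    constructor
    · exact ha
    · rw [← Multiset.coe_eq_coe, Finset.coe_toList, Finset.erase_val]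
      have := congrArg (fun m => Multiset.erase m a) hco
      simpa using this
  · rintro ⟨s, L⟩ hx; simp
  · intro B hB
    simp only [List.mem_toFinset, List.mem_permutations] at hB
    have hBne : B ≠ [] := by
      intro h
      rw [h] at hB
      have := hB.length_eq
      simp [Finset.length_toList] at this
      exact hSne.ne_empty (Finset.card_eq_zero.mp this.symm)
    obtain ⟨a, t, rfl⟩ := List.exists_cons_of_ne_nil hBne
    rfl
  · rintro ⟨s, L⟩ hx; rfl

theorem rao_blackwell_single_sample [DecidableEq α] [Inhabited α] (D S : Finset α)
    (hS : S ⊆ D) (hSne : S.Nonempty) (p f : α → ℝ)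
    (hp : ∀ x ∈ D, 0 < p x) (hsum : ∑ x ∈ D, p x = 1) :
    ((S.toList.permutations.map (fun B => ordProb p 1 B * f B.headI)).sum) / setProb p 1 S
      = ∑ s ∈ S, p s * (setProb p (1 - p s) (S.erase s) / setProb p 1 S) * f s := by
  rw [perm_split S hSne]
  have h1 : ∀ s ∈ S,
      (((S.erase s).toList.permutations.map
          (fun L => (fun B => ordProb p 1 B * f B.headI) (s :: L))).sum)
        = p s * setProb p (1 - p s) (S.erase s) * f s := by
    intro s _
    have : ∀ L : List α, (fun B => ordProb p 1 B * f B.headI) (s :: L)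
        = (p s * f s) * ordProb p (1 - p s) L := by
      intro L
      simp only [ordProb, List.headI_cons, div_one]
      ring
    simp only [this]
    rw [List.sum_map_mul_left]
    unfold setProb
    ring
  rw [Finset.sum_congr rfl h1, Finset.sum_div]
  refine Finset.sum_congr rfl fun s _ => ?_
  field_simp
end

section
/- The probability of an unordered sample without replacement admits the closed form p(S) = ∑_{C ⊆ S} (-1)^{|C|} (1 - ∑_{i∈S} p(i)) / (1 - ∑_{i∈S\C} p(i)), an inclusion–exclusion sum over 2^{|S|} subsets. -/
open Finset MeasureTheory

variable {α : Type*}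

/-- Head-extraction decomposition of the multiset of permutations of a nodup list. -/
lemma perm_multiset_bind [DecidableEq α] (l : List α) (hl : l.Nodup) (hne : l ≠ []) :
    (↑l.permutations : Multiset (List α))
      = l.toFinset.val.bind
          (fun b => Multiset.map (b :: ·) (↑(l.erase b).permutations : Multiset (List α))) := by
  have hval : l.toFinset.val = ↑l := by
    rw [List.toFinset, Multiset.toFinset_val,
      Multiset.dedup_eq_self.mpr (Multiset.coe_nodup.mpr hl)]
  rw [Multiset.Nodup.ext]
  · intro a
    simp only [Multiset.mem_coe, List.mem_permutations, Multiset.mem_bind, Multiset.mem_map,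
      hval, Multiset.mem_coe]
    constructor
    · intro h
      cases a with
      | nil => exact absurd h.symm.eq_nil hne
      | cons b L =>
        refine ⟨b, h.subset List.mem_cons_self, L, ?_, rfl⟩
        have := h.erase b
        rwa [List.erase_cons_head] at this
    · rintro ⟨b, hb, L, hL, rfl⟩
      exact ((hL.cons b).trans (List.perm_cons_erase hb).symm).symm.symm
  · exact Multiset.coe_nodup.mpr (List.nodup_permutations l hl)
  · rw [Multiset.nodup_bind]
    constructor
    · intro b _
      exact Multiset.Nodup.map List.cons_injective
        (Multiset.coe_nodup.mpr (List.nodup_permutations _ (hl.erase b)))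
    · refine ⟨l, hval, ?_⟩
      refine hl.imp ?_
      intro a b hab
      rw [Function.onFun, Multiset.disjoint_left]
      rintro x hx hx'
      obtain ⟨y, _, rfl⟩ := Multiset.mem_map.mp hx
      obtain ⟨z, _, hz⟩ := Multiset.mem_map.mp hx'
      exact hab (List.head_eq_of_cons_eq hz.symm ▸ rfl)

lemma perm_head_sum [DecidableEq α] (f : List α → ℝ) (l : List α) (hl : l.Nodup) (hne : l ≠ []) :
    (l.permutations.map f).sum
      = ∑ b ∈ l.toFinset, ((l.erase b).permutations.map (fun L => f (b :: L))).sum := by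
  have h1 : (l.permutations.map f).sum
      = (Multiset.map f (↑l.permutations : Multiset (List α))).sum := by
    simp
  rw [h1, perm_multiset_bind l hl hne, Multiset.map_bind, Multiset.sum_bind,
    Finset.sum_eq_multiset_sum]
  congr 1
  apply Multiset.map_congr rfl
  intro b _
  rw [Multiset.map_map]
  simp [Function.comp]

/-- Recurrence: extract the first draw. -/
lemma setProb_rec [DecidableEq α] (p : α → ℝ) (t : ℝ) (S : Finset α) (hne : S.Nonempty) :
    setProb p t S = ∑ b ∈ S, (p b / t) * setProb p (t - p b) (S.erase b) := by
  unfold setProb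
  have hl : S.toList.Nodup := Finset.nodup_toList S
  have hne' : S.toList ≠ [] := by
    simp [Finset.toList_eq_nil, hne.ne_empty]
  rw [perm_head_sum (ordProb p t) S.toList hl hne', Finset.toList_toFinset]
  refine Finset.sum_congr rfl ?_
  intro b hb
  have hperm : (S.toList.erase b).Perm (S.erase b).toList := by
    rw [← Multiset.coe_eq_coe, ← Multiset.coe_erase, Finset.coe_toList, Finset.coe_toList,
      Finset.erase_val]
  have hperm2 := (hperm.permutations.map (ordProb p (t - p b))).sum_eq
  have : ∀ L, ordProb p t (b :: L) = (p b / t) * ordProb p (t - p b) L := fun L => rfl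
  simp only [this]
  rw [List.sum_map_mul_left, hperm2]

/-- Generalized closed form, for arbitrary remaining mass `t`. -/
lemma setProb_closed [DecidableEq α] (p : α → ℝ) (S : Finset α) :
    ∀ t : ℝ, (∀ x ∈ S, 0 ≤ p x) → (∑ i ∈ S, p i < t) →
    setProb p t S = ∑ C ∈ S.powerset, (-1 : ℝ) ^ C.card *
      ((t - ∑ i ∈ S, p i) / (t - ∑ i ∈ S \ C, p i)) := by
  induction S using Finset.strongInduction with
  | _ S IH =>
    intro t hp hlt
    have hσ0 : (0:ℝ) ≤ ∑ i ∈ S, p i := Finset.sum_nonneg hp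
    have ht : (0:ℝ) < t := lt_of_le_of_lt hσ0 hlt
    rcases S.eq_empty_or_nonempty with rfl | hne
    · simp [setProb, ordProb, div_self ht.ne']
    -- denominators are positive
    have hden : ∀ C ∈ S.powerset, (0:ℝ) < t - ∑ i ∈ S \ C, p i := by
      intro C _
      have : ∑ i ∈ S \ C, p i ≤ ∑ i ∈ S, p i :=
        Finset.sum_le_sum_of_subset_of_nonneg (Finset.sdiff_subset) (fun i hi _ => hp i hi)
      linarith
    rw [setProb_rec p t S hne]
    have hstep : ∀ b ∈ S, (p b / t) * setProb p (t - p b) (S.erase b)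
        = ∑ C ∈ (S.erase b).powerset,
            (p b / t) * ((-1 : ℝ) ^ C.card *
              ((t - ∑ i ∈ S, p i) / (t - ∑ i ∈ S \ C, p i))) := by
      intro b hb
      have hsub : S.erase b ⊂ S := Finset.erase_ssubset hb
      have hsum_erase : ∑ i ∈ S.erase b, p i = (∑ i ∈ S, p i) - p b := by
        rw [← Finset.sum_erase_add S p hb]; ring
      have hIH := IH (S.erase b) hsub (t - p b)
        (fun x hx => hp x (Finset.mem_of_mem_erase hx))
        (by rw [hsum_erase]; linarith)
      rw [hIH, Finset.mul_sum]
      refine Finset.sum_congr rfl ?_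
      intro C hC
      have hCsub : C ⊆ S.erase b := Finset.mem_powerset.mp hC
      have hbC : b ∉ C := fun h => (Finset.mem_erase.mp (hCsub h)).1 rfl
      have h1 : t - p b - ∑ i ∈ S.erase b, p i = t - ∑ i ∈ S, p i := by
        rw [hsum_erase]; ring
      have h2 : (S.erase b) \ C = (S \ C).erase b := by
        ext x
        simp only [Finset.mem_sdiff, Finset.mem_erase]
        tauto
      have hbSC : b ∈ S \ C := Finset.mem_sdiff.mpr ⟨hb, hbC⟩
      have h3 : t - p b - ∑ i ∈ (S.erase b) \ C, p i = t - ∑ i ∈ S \ C, p i := by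
        rw [h2, ← Finset.sum_erase_add (S \ C) p hbSC]; ring
      rw [h1, h3]
    rw [Finset.sum_congr rfl hstep]
    -- swap the order of summation
    rw [Finset.sum_comm' (s := S) (t := fun b => (S.erase b).powerset)
      (t' := S.powerset) (s' := fun C => S \ C) ?_]
    · -- now sum over C of inner sum over b ∈ S \ C
      have hinner : ∀ C ∈ S.powerset,
          (∑ b ∈ S \ C, (p b / t) * ((-1 : ℝ) ^ C.card *
            ((t - ∑ i ∈ S, p i) / (t - ∑ i ∈ S \ C, p i))))
          = (-1 : ℝ) ^ C.card * ((t - ∑ i ∈ S, p i) / (t - ∑ i ∈ S \ C, p i))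
            - (-1 : ℝ) ^ C.card * ((t - ∑ i ∈ S, p i) / t) := by
        intro C hC
        rw [← Finset.sum_mul, ← Finset.sum_div]
        have hB := (hden C hC).ne'
        set σ := ∑ i ∈ S \ C, p i with hσ
        have : σ / t * ((-1 : ℝ) ^ C.card * ((t - ∑ i ∈ S, p i) / (t - σ)))
            = (-1 : ℝ) ^ C.card * ((t - ∑ i ∈ S, p i) / (t - σ))
              - (-1 : ℝ) ^ C.card * ((t - ∑ i ∈ S, p i) / t) := by
          field_simp
          ring
        exact this
      rw [Finset.sum_congr rfl hinner, Finset.sum_sub_distrib]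
      have : ∑ C ∈ S.powerset, (-1 : ℝ) ^ C.card * ((t - ∑ i ∈ S, p i) / t)
          = (∑ C ∈ S.powerset, (-1 : ℝ) ^ C.card) * ((t - ∑ i ∈ S, p i) / t) := by
        rw [Finset.sum_mul]
      have hzero : ∑ C ∈ S.powerset, (-1 : ℝ) ^ C.card = 0 := by
        have h1 := Finset.sum_powerset_neg_one_pow_card (x := S)
        have h2 : ((∑ m ∈ S.powerset, (-1 : ℤ) ^ m.card : ℤ) : ℝ)
            = ∑ m ∈ S.powerset, (-1 : ℝ) ^ m.card := by push_cast; ring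
        rw [← h2, h1, if_neg hne.ne_empty]; norm_num
      rw [this, hzero]
      ring
    · intro b C
      simp only [Finset.mem_powerset, Finset.mem_sdiff, Finset.subset_erase]
      tauto

theorem setProb_inclusion_exclusion [DecidableEq α] (D S : Finset α) (hS : S ⊆ D)
    (p : α → ℝ) (hp : ∀ x ∈ D, 0 < p x) (hsum : ∑ x ∈ D, p x = 1)
    (hmass : ∑ i ∈ S, p i < 1) :
    setProb p 1 S = ∑ C ∈ S.powerset, (-1 : ℝ) ^ C.card *
      ((1 - ∑ i ∈ S, p i) / (1 - ∑ i ∈ S \ C, p i)) :=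
  setProb_closed p S 1 (fun x hx => (hp x (hS hx)).le) hmass
end

section
/- The conditional probability that s is the LAST element of an ordered sample without replacement, given the unordered sample S^k, equals (p(S^k\{s})/p(S^k)) · p(s)/(1 - ∑_{s'∈S^k\{s}} p(s')). -/
open Finset MeasureTheory

variable {α : Type*}

lemma ordProb_append_single (p : α → ℝ) (s : α) :
    ∀ (L : List α) (t : ℝ),
      ordProb p t (L ++ [s]) = ordProb p t L * (p s / (t - (L.map p).sum)) := by
  intro L
  induction L with
  | nil => intro t; simp [ordProb]
  | cons b L ih =>
      intro t
      rw [List.cons_append, ordProb, ih, ordProb, List.map_cons, List.sum_cons, ← sub_sub]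
      ring

lemma sum_map_mul_const (l : List ℝ) (c : ℝ) :
    (l.map (fun x => x * c)).sum = l.sum * c := by
  induction l with
  | nil => simp
  | cons a l ih => simp [ih]; ring

theorem last_element_conditional [DecidableEq α] (D S : Finset α) (hS : S ⊆ D)
    (s : α) (hs : s ∈ S) (p : α → ℝ) (hp : ∀ x ∈ D, 0 < p x) (hsum : ∑ x ∈ D, p x = 1) :
    (((S.erase s).toList.permutations.map (fun L => ordProb p 1 (L ++ [s]))).sum) / setProb p 1 S
      = (setProb p 1 (S.erase s) / setProb p 1 S) * (p s / (1 - ∑ s' ∈ S.erase s, p s')) := by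
  have key : (((S.erase s).toList.permutations.map (fun L => ordProb p 1 (L ++ [s]))).sum)
      = setProb p 1 (S.erase s) * (p s / (1 - ∑ s' ∈ S.erase s, p s')) := by
    have hmap : ((S.erase s).toList.permutations.map (fun L => ordProb p 1 (L ++ [s])))
        = ((S.erase s).toList.permutations.map
            (fun L => ordProb p 1 L * (p s / (1 - ∑ s' ∈ S.erase s, p s')))) := by
      apply List.map_congr_left
      intro L hL
      rw [ordProb_append_single]
      have hperm : L.Perm (S.erase s).toList := List.mem_permutations.mp hL
      have : (L.map p).sum = ∑ s' ∈ S.erase s, p s' := by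
        rw [(hperm.map p).sum_eq]
        rw [← Finset.sum_map_toList]
      rw [this]
    rw [hmap]
    have := sum_map_mul_const ((S.erase s).toList.permutations.map (ordProb p 1))
      (p s / (1 - ∑ s' ∈ S.erase s, p s'))
    rw [List.map_map] at this
    exact this
  rw [key, setProb]
  ring
end

section
/- The stochastic sum-and-sample estimator is unbiased: E_{B^k}[ ∑_{j=1}^{k-1} p(b_j) f(b_j) + (1 - ∑_{j=1}^{k-1} p(b_j)) f(b_k) ] = E_{x~p}[f(x)], where B^k is an ordered sample without replacement of size k from p. -/
open Finset MeasureTheory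

variable {α : Type*}

/-- The Finset of all nodup lists of length `k` with elements in `D`. -/
def kLists [DecidableEq α] : ℕ → Finset α → Finset (List α)
  | 0, _ => {[]}
  | k + 1, D => D.biUnion fun b => (kLists k (D.erase b)).image (b :: ·)

lemma mem_kLists [DecidableEq α] {k : ℕ} {D : Finset α} {B : List α} :
    B ∈ kLists k D ↔ B.Nodup ∧ B.length = k ∧ ∀ x ∈ B, x ∈ D := by
  induction k generalizing D B with
  | zero =>
    simp only [kLists, Finset.mem_singleton]
    constructor
    · rintro rfl; simp
    · rintro ⟨_, h, _⟩; exact List.eq_nil_of_length_eq_zero h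
  | succ k ih =>
    simp only [kLists, Finset.mem_biUnion, Finset.mem_image]
    constructor
    · rintro ⟨b, hb, L, hL, rfl⟩
      obtain ⟨hnd, hlen, hmem⟩ := ih.mp hL
      refine ⟨?_, by simp [hlen], ?_⟩
      · exact List.nodup_cons.mpr ⟨fun h => (Finset.mem_erase.mp (hmem _ h)).1 rfl, hnd⟩
      · intro x hx
        rcases List.mem_cons.mp hx with rfl | hx
        · exact hb
        · exact Finset.mem_of_mem_erase (hmem _ hx)
    · rintro ⟨hnd, hlen, hmem⟩
      cases B with
      | nil => simp at hlen
      | cons b L =>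
        obtain ⟨hbL, hndL⟩ := List.nodup_cons.mp hnd
        refine ⟨b, hmem _ List.mem_cons_self, L, ih.mpr ⟨hndL, by simpa using hlen, ?_⟩, rfl⟩
        intro x hx
        exact Finset.mem_erase.mpr ⟨fun h => hbL (h ▸ hx), hmem _ (List.mem_cons_of_mem _ hx)⟩

/-- Bridge: summing a function over all permutations of all `k`-subsets of `D`
equals summing it over all nodup `k`-lists in `D`. -/
lemma sum_permutations_eq_sum_kLists [DecidableEq α] (k : ℕ) (D : Finset α)
    (G : List α → ℝ) :
    ∑ S ∈ D.powersetCard k, (S.toList.permutations.map G).sum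
      = ∑ B ∈ kLists k D, G B := by
  have hinner : ∀ S : Finset α,
      (S.toList.permutations.map G).sum = ∑ B ∈ S.toList.permutations.toFinset, G B := by
    intro S
    rw [← List.sum_toFinset _ (List.nodup_permutations _ S.nodup_toList)]
  rw [Finset.sum_congr rfl fun S _ => hinner S]
  rw [← Finset.sum_biUnion]
  · apply Finset.sum_congr _ (fun _ _ => rfl)
    ext B
    simp only [Finset.mem_biUnion, Finset.mem_powersetCard, List.mem_toFinset,
      List.mem_permutations, mem_kLists]
    constructor
    · rintro ⟨S, ⟨hSD, hScard⟩, hperm⟩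
      refine ⟨hperm.nodup_iff.mpr S.nodup_toList, by
        rw [hperm.length_eq, Finset.length_toList, hScard], fun x hx => hSD ?_⟩
      rw [← Finset.mem_toList]
      exact hperm.mem_iff.mp hx
    · rintro ⟨hnd, hlen, hmem⟩
      refine ⟨B.toFinset, ⟨fun x hx => hmem x (List.mem_toFinset.mp hx), ?_⟩,
        (List.toFinset_toList hnd).symm⟩
      rw [List.toFinset_card_of_nodup hnd, hlen]
  · intro S hS S' hS' hne
    simp only [Finset.disjoint_left, List.mem_toFinset, List.mem_permutations]
    intro B hB hB'
    exact hne (by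
      have h1 : B.toFinset = S := by
        rw [List.toFinset_eq_of_perm _ _ hB, Finset.toList_toFinset]
      have h2 : B.toFinset = S' := by
        rw [List.toFinset_eq_of_perm _ _ hB', Finset.toList_toFinset]
      rw [← h1, h2])

lemma kLists_succ_sum [DecidableEq α] (k : ℕ) (D : Finset α) (G : List α → ℝ) :
    ∑ B ∈ kLists (k + 1) D, G B
      = ∑ b ∈ D, ∑ L ∈ kLists k (D.erase b), G (b :: L) := by
  show ∑ B ∈ D.biUnion _, G B = _
  rw [Finset.sum_biUnion]
  · refine Finset.sum_congr rfl fun b _ => ?_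
    rw [Finset.sum_image]
    intro x _ y _ h
    exact (List.cons.inj h).2
  · intro b _ b' _ hne
    simp only [Finset.disjoint_left, Finset.mem_image]
    rintro B ⟨L, _, rfl⟩ ⟨L', _, h⟩
    exact hne (List.cons.inj h).1.symm

/-- Normalization: the ordered-sample probabilities sum to 1. -/
lemma sum_ordProb [DecidableEq α] (k : ℕ) : ∀ (D : Finset α) (t : ℝ) (p : α → ℝ),
    (∀ x ∈ D, 0 < p x) → (∑ x ∈ D, p x = t) → k ≤ D.card →
    ∑ B ∈ kLists k D, ordProb p t B = 1 := by
  induction k with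
  | zero =>
    intro D t p _ _ _
    simp [kLists, ordProb]
  | succ k ih =>
    intro D t p hp ht hk
    have hD : D.Nonempty := Finset.card_pos.mp (lt_of_lt_of_le (Nat.succ_pos k) hk)
    have htpos : 0 < t := ht ▸ Finset.sum_pos hp hD
    rw [kLists_succ_sum]
    have : ∀ b ∈ D, ∑ L ∈ kLists k (D.erase b), ordProb p t (b :: L) = p b / t := by
      intro b hb
      have herase : ∑ x ∈ D.erase b, p x = t - p b := by
        rw [← ht, ← Finset.add_sum_erase D p hb]; ring
      have hcard : k ≤ (D.erase b).card := by
        rw [Finset.card_erase_of_mem hb]; omega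
      have := ih (D.erase b) (t - p b) p (fun x hx => hp x (Finset.mem_of_mem_erase hx))
        herase hcard
      simp only [ordProb, ← Finset.mul_sum, this, mul_one]
    rw [Finset.sum_congr rfl this, ← Finset.sum_div, ht, div_self (ne_of_gt htpos)]

/-- The estimator. -/
noncomputable def estim [Inhabited α] (p f : α → ℝ) (t : ℝ) (B : List α) : ℝ :=
  (B.dropLast.map (fun b => p b * f b)).sum + (t - (B.dropLast.map p).sum) * f B.reverse.headI

lemma estim_cons [Inhabited α] (p f : α → ℝ) (t : ℝ) (b : α) (L : List α) (hL : L ≠ []) :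
    estim p f t (b :: L) = p b * f b + estim p f (t - p b) L := by
  unfold estim
  have h1 : (b :: L).dropLast = b :: L.dropLast := List.dropLast_cons_of_ne_nil hL
  have h2 : (b :: L).reverse.headI = L.reverse.headI := by
    rw [List.reverse_cons]
    cases hrev : L.reverse with
    | nil => exact absurd (by simpa using hrev) hL
    | cons x xs => simp
  rw [h1, h2]
  simp only [List.map_cons, List.sum_cons]
  ring

/-- Main generalized unbiasedness lemma. -/
lemma main_lemma [DecidableEq α] [Inhabited α] (k : ℕ) : ∀ (D : Finset α) (t : ℝ) (p f : α → ℝ),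
    (∀ x ∈ D, 0 < p x) → (∑ x ∈ D, p x = t) → 1 ≤ k → k ≤ D.card →
    ∑ B ∈ kLists k D, ordProb p t B * estim p f t B = ∑ x ∈ D, p x * f x := by
  induction k with
  | zero => intro _ _ _ _ _ _ h _; omega
  | succ k ih =>
    intro D t p f hp ht _ hk
    have hD : D.Nonempty := Finset.card_pos.mp (lt_of_lt_of_le (Nat.succ_pos k) hk)
    have htpos : 0 < t := ht ▸ Finset.sum_pos hp hD
    rw [kLists_succ_sum]
    rcases Nat.eq_zero_or_pos k with rfl | hkpos
    · -- base case k+1 = 1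
      have : ∀ b ∈ D, ∑ L ∈ kLists 0 (D.erase b), ordProb p t (b :: L) * estim p f t (b :: L)
          = p b / t * (t * f b) := by
        intro b _
        simp [kLists, ordProb, estim]
      rw [Finset.sum_congr rfl this]
      refine Finset.sum_congr rfl fun b hb => ?_
      field_simp
    · -- inductive step
      have key : ∀ b ∈ D,
          ∑ L ∈ kLists k (D.erase b), ordProb p t (b :: L) * estim p f t (b :: L)
            = p b / t * ∑ x ∈ D, p x * f x := by
        intro b hb
        have herase : ∑ x ∈ D.erase b, p x = t - p b := by
          rw [← ht, ← Finset.add_sum_erase D p hb]; ring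
        have hcard : k ≤ (D.erase b).card := by
          rw [Finset.card_erase_of_mem hb]; omega
        have hp' : ∀ x ∈ D.erase b, 0 < p x := fun x hx => hp x (Finset.mem_of_mem_erase hx)
        have hnorm := sum_ordProb k (D.erase b) (t - p b) p hp' herase hcard
        have hih := ih (D.erase b) (t - p b) p f hp' herase hkpos hcard
        have hstep : ∀ L ∈ kLists k (D.erase b),
            ordProb p t (b :: L) * estim p f t (b :: L)
              = p b / t * (ordProb p (t - p b) L * (p b * f b)
                  + ordProb p (t - p b) L * estim p f (t - p b) L) := by
          intro L hL
          have hLne : L ≠ [] := by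
            intro h
            have := (mem_kLists.mp hL).2.1
            rw [h] at this
            simp at this
            omega
          rw [estim_cons p f t b L hLne]
          show p b / t * ordProb p (t - p b) L * _ = _
          ring
        rw [Finset.sum_congr rfl hstep, ← Finset.mul_sum, Finset.sum_add_distrib,
          ← Finset.sum_mul, hnorm, hih, one_mul]
        congr 1
        rw [← Finset.add_sum_erase D (fun x => p x * f x) hb]
      rw [Finset.sum_congr rfl key, ← Finset.sum_mul, ← Finset.sum_div, ht,
        div_self (ne_of_gt htpos), one_mul]

theorem stochastic_sum_and_sample_unbiased [DecidableEq α] [Inhabited α] (D : Finset α)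
    (k : ℕ) (hk1 : 1 ≤ k) (hk : k ≤ D.card) (p f : α → ℝ)
    (hp : ∀ x ∈ D, 0 < p x) (hsum : ∑ x ∈ D, p x = 1) :
    ∑ S ∈ D.powersetCard k, (S.toList.permutations.map (fun B =>
        ordProb p 1 B * ((B.dropLast.map (fun b => p b * f b)).sum
          + (1 - (B.dropLast.map p).sum) * f B.reverse.headI))).sum
      = ∑ x ∈ D, p x * f x := by
  have := sum_permutations_eq_sum_kLists k D (fun B => ordProb p 1 B * estim p f 1 B)
  simp only [estim] at this
  rw [this]
  exact main_lemma k D 1 p f hp hsum hk1 hk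
end

section
/- The conditional probability that s' is the second element sampled given the unordered sample S^k and that the first element is s (with s' ≠ s) equals (p(s')/(1 − p(s))) · R^{D\{s}}(S^k, s'), where R^{D\{s}}(S^k,s') = p^{D\{s,s'}}(S^k\{s,s'}) / p^{D\{s}}(S^k\{s}) is the second-order leave-one-out ratio. -/
open Finset MeasureTheory

variable {α : Type*}

lemma sum_map_mul_left' (l : List (List α)) (c : ℝ) (f : List α → ℝ) :
    (l.map (fun L => c * f L)).sum = c * (l.map f).sum := by
  induction l with
  | nil => simp
  | cons h t ih => simp [ih, mul_add]

theorem second_element_conditional [DecidableEq α] (D S : Finset α) (hS : S ⊆ D)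
    (hcard : 2 ≤ S.card) (s s' : α) (hs : s ∈ S) (hs' : s' ∈ S) (hne : s' ≠ s)
    (p : α → ℝ) (hp : ∀ x ∈ D, 0 < p x) (hsum : ∑ x ∈ D, p x = 1) :
    ((((S.erase s).erase s').toList.permutations.map
        (fun L => ordProb p 1 (s :: s' :: L))).sum)
      / (((S.erase s).toList.permutations.map (fun L => ordProb p 1 (s :: L))).sum)
      = (p s' / (1 - p s)) *
        (setProb p (1 - p s - p s') ((S.erase s).erase s')
          / setProb p (1 - p s) (S.erase s)) := by
  have hps : p s ≠ 0 := ne_of_gt (hp s (hS hs))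
  have h1 : (((S.erase s).erase s').toList.permutations.map
      (fun L => ordProb p 1 (s :: s' :: L))).sum
      = p s * ((p s' / (1 - p s)) * setProb p (1 - p s - p s') ((S.erase s).erase s')) := by
    rw [setProb, ← sum_map_mul_left', ← sum_map_mul_left']
    refine congrArg List.sum (List.map_congr_left fun L _ => ?_)
    simp [ordProb, mul_assoc]
  have h2 : (((S.erase s).toList.permutations.map
      (fun L => ordProb p 1 (s :: L))).sum
      = p s * setProb p (1 - p s) (S.erase s)) := by
    rw [setProb, ← sum_map_mul_left']
    refine congrArg List.sum (List.map_congr_left fun L _ => ?_)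
    simp [ordProb]
  rw [h1, h2, mul_div_mul_left _ _ hps, mul_div_assoc]
end
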